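/- Let 1 ≤ p < ∞ and let w be a weight in the restricted class A_p^R, i.e., [w]_{A_p^R} := sup over cubes Q and measurable E ⊆ Q of (|E|/|Q|)·(w(Q)/w(E))^{1/p} < ∞. Then for every measurable set E ⊆ ℝⁿ of finite measure, the Hardy–Littlewood maximal function satisfies ‖M𝟙_E‖_{L^{p,∞}(w)} ≲ [w]_{A_p^R} · w(E)^{1/p}. -/

import Mathlib

open Set Filter MeasureTheory
open scoped ENNReal

noncomputable section

/-- Cubes in `ℝⁿ` are realized as closed balls for the sup norm on `Fin n → ℝ`.
The Hardy–Littlewood maximal function of `𝟙_E`: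
`M𝟙_E(x) = sup_{Q ∋ x} |E ∩ Q| / |Q|` over all cubes `Q`. -/
def maxInd {n : ℕ} (E : Set (Fin n → ℝ)) (x : Fin n → ℝ) : ℝ≥0∞ :=
  ⨆ (c : Fin n → ℝ) (r : ℝ) (_ : 0 < r) (_ : x ∈ Metric.closedBall c r),
    volume (E ∩ Metric.closedBall c r) / volume (Metric.closedBall c r)

open Metric

lemma ennreal_div_le_helper {b c t : ℝ≥0∞} (h : b / c ≤ t) (hc : c ≠ ⊤) (ht : t ≠ ⊤) :
    b ≤ t * c := by
  rcases eq_or_ne c 0 with rfl | hc0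
  · have hb : b = 0 := by
      by_contra hb
      rw [ENNReal.div_zero hb] at h
      exact ht (top_le_iff.1 h)
    simp [hb]
  · rwa [ENNReal.div_le_iff hc0 hc] at h

lemma ennreal_rpow_inv_le {x y : ℝ≥0∞} {p : ℝ} (hp : 1 ≤ p) (h : x ^ (1/p) ≤ y) :
    x ≤ y ^ p := by
  have hp0 : (0:ℝ) < p := lt_of_lt_of_le one_pos hp
  calc x = (x ^ (1/p)) ^ p := by
        rw [← ENNReal.rpow_mul, one_div_mul_cancel hp0.ne', ENNReal.rpow_one]
    _ ≤ y ^ p := ENNReal.rpow_le_rpow h hp0.le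

/-- **Restricted weak type bound for `M` with `A_p^R` weights.** If `1 ≤ p < ∞` and
`[w]_{A_p^R} ≤ K < ∞`, then `‖M𝟙_E‖_{L^{p,∞}(w)} ≲ K · w(E)^{1/p}`, with an implicit
constant depending only on `n` and `p`. -/
theorem stmt_10 (n : ℕ) (p : ℝ) (hp : 1 ≤ p) :
    ∃ C : ℝ, 0 < C ∧
      ∀ (w : (Fin n → ℝ) → ℝ), (∀ x, 0 ≤ w x) → Measurable w →
      ∀ K : ℝ≥0∞, K ≠ ⊤ →
      (∀ (c : Fin n → ℝ) (r : ℝ), 0 < r →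
        ∀ E : Set (Fin n → ℝ), E ⊆ Metric.closedBall c r → MeasurableSet E →
          volume E / volume (Metric.closedBall c r) *
            ((∫⁻ x in Metric.closedBall c r, ENNReal.ofReal (w x)) /
              (∫⁻ x in E, ENNReal.ofReal (w x))) ^ (1 / p) ≤ K) →
      ∀ E : Set (Fin n → ℝ), MeasurableSet E → volume E < ⊤ →
      ∀ lam : ℝ, 0 < lam →
        ENNReal.ofReal lam *
            (∫⁻ x in {x | ENNReal.ofReal lam < maxInd E x}, ENNReal.ofReal (w x)) ^ (1 / p)
          ≤ ENNReal.ofReal C * K * (∫⁻ x in E, ENNReal.ofReal (w x)) ^ (1 / p) := by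
  have hp0 : (0:ℝ) < p := lt_of_lt_of_le one_pos hp
  have hip : (0:ℝ) < 1/p := by positivity
  refine ⟨(8:ℝ)^n, by positivity, ?_⟩
  intro w hw hwm K hKtop hAp E hmE hEvol lam hlam
  set ν : Measure (Fin n → ℝ) := volume.withDensity (fun x => ENNReal.ofReal (w x)) with hνdef
  have hνap : ∀ A : Set (Fin n → ℝ), MeasurableSet A →
      (∫⁻ x in A, ENNReal.ofReal (w x)) = ν A := by
    intro A hA
    rw [hνdef, withDensity_apply _ hA]
  -- Branch A : K = 0
  by_cases hK0 : K = 0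
  · set S := {x | ENNReal.ofReal lam < maxInd E x} with hSdef
    have hcube : ∀ (c : Fin n → ℝ) (r : ℝ), 0 < r → ν (closedBall c r) = 0 := by
      intro c r hr
      by_contra hQ
      have hQm : MeasurableSet (closedBall c r) := measurableSet_closedBall
      have hvol0 : volume (closedBall c r) ≠ 0 :=
        (lt_of_lt_of_le (measure_ball_pos _ _ hr) (measure_mono ball_subset_closedBall)).ne'
      have hvolt : volume (closedBall c r) ≠ ⊤ := measure_closedBall_lt_top.ne
      by_cases hQt : ν (closedBall c r) = ⊤
      · -- find a piece of positive finite ν-measure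
        set F : ℕ → Set (Fin n → ℝ) := fun m => closedBall c r ∩ {x | w x ≤ (m:ℝ)} with hF
        have hFm : ∀ m, MeasurableSet (F m) :=
          fun m => hQm.inter (hwm measurableSet_Iic)
        have hmono : Monotone F := by
          intro i j hij
          refine inter_subset_inter_right _ (fun x hx => ?_)
          simp only [mem_setOf_eq] at hx ⊢
          exact le_trans hx (by exact_mod_cast hij)
        have hun : ⋃ m, F m = closedBall c r := by
          ext x
          simp only [mem_iUnion, hF, mem_inter_iff, mem_setOf_eq]
          constructor
          · rintro ⟨m, h, _⟩; exact h
          · intro h; exact ⟨⌈w x⌉₊, h, Nat.le_ceil _⟩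
        have hsup : ν (closedBall c r) = ⨆ m, ν (F m) := by
          rw [← hun]; exact hmono.measure_iUnion
        have h1 : (1:ℝ≥0∞) < ⨆ m, ν (F m) := by
          rw [← hsup, hQt]; exact ENNReal.one_lt_top
        obtain ⟨m, hm⟩ := lt_iSup_iff.1 h1
        have hFt : ν (F m) ≠ ⊤ := by
          have h2 : ν (F m) = ∫⁻ x in F m, ENNReal.ofReal (w x) := (hνap _ (hFm m)).symm
          have h3 : (∫⁻ x in F m, ENNReal.ofReal (w x)) ≤ (m:ℝ≥0∞) * volume (F m) := by
            calc (∫⁻ x in F m, ENNReal.ofReal (w x)) ≤ ∫⁻ _ in F m, (m:ℝ≥0∞) := by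
                  refine setLIntegral_mono measurable_const (fun x hx => ?_)
                  calc ENNReal.ofReal (w x) ≤ ENNReal.ofReal (m:ℝ) :=
                        ENNReal.ofReal_le_ofReal hx.2
                    _ = (m:ℝ≥0∞) := ENNReal.ofReal_natCast m
              _ = (m:ℝ≥0∞) * volume (F m) := setLIntegral_const _ _
          have h4 : (m:ℝ≥0∞) * volume (F m) < ⊤ :=
            ENNReal.mul_lt_top (ENNReal.natCast_lt_top m)
              (lt_of_le_of_lt (measure_mono inter_subset_left) measure_closedBall_lt_top)
          rw [h2]; exact (lt_of_le_of_lt h3 h4).ne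
        have hF0 : ν (F m) ≠ 0 := (lt_trans zero_lt_one hm).ne'
        have hFvol : volume (F m) ≠ 0 := by
          intro h0
          apply hF0
          rw [← hνap _ (hFm m), Measure.restrict_eq_zero.2 h0, lintegral_zero_measure]
        have hap := hAp c r hr (F m) inter_subset_left (hFm m)
        rw [hK0, hνap _ hQm, hνap _ (hFm m)] at hap
        have hap0 : volume (F m) / volume (closedBall c r) * (ν (closedBall c r) / ν (F m)) ^ (1/p) = 0 :=
          le_antisymm hap (zero_le)
        rcases mul_eq_zero.1 hap0 with h | h
        · rcases ENNReal.div_eq_zero_iff.1 h with h' | h'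
          · exact hFvol h'
          · exact hvolt h'
        · rw [ENNReal.rpow_eq_zero_iff] at h
          rcases h with ⟨h', _⟩ | ⟨h', h''⟩
          · rcases ENNReal.div_eq_zero_iff.1 h' with h'' | h''
            · exact hQ h''
            · exact hFt h''
          · linarith
      · -- ν Q finite nonzero
        have hap := hAp c r hr (closedBall c r) subset_rfl hQm
        rw [hK0, hνap _ hQm, ENNReal.div_self hvol0 hvolt, ENNReal.div_self hQ hQt, one_mul,
          ENNReal.one_rpow] at hap
        exact absurd hap (by norm_num)
    have huniv : ν univ = 0 := by
      refine le_antisymm ?_ (zero_le)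
      have hsub : (univ : Set (Fin n → ℝ)) ⊆ ⋃ m : ℕ, closedBall 0 ((m:ℝ)+1) := by
        intro x _
        refine mem_iUnion.2 ⟨⌈dist x 0⌉₊, mem_closedBall.2 ?_⟩
        have := Nat.le_ceil (dist x 0)
        linarith
      calc ν univ ≤ ν (⋃ m : ℕ, closedBall 0 ((m:ℝ)+1)) := measure_mono hsub
        _ ≤ ∑' m : ℕ, ν (closedBall 0 ((m:ℝ)+1)) := measure_iUnion_le _
        _ = 0 := by simp [hcube 0 _ (by positivity : (0:ℝ) < (_:ℕ)+1)]
    have hS : (∫⁻ x in S, ENNReal.ofReal (w x)) = 0 := by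
      refine le_antisymm ?_ (zero_le)
      calc (∫⁻ x in S, ENNReal.ofReal (w x)) ≤ ∫⁻ x in univ, ENNReal.ofReal (w x) :=
            lintegral_mono_set (subset_univ S)
        _ = ν univ := hνap _ MeasurableSet.univ
        _ = 0 := huniv
    rw [hS, ENNReal.zero_rpow_of_pos hip, mul_zero]
    exact zero_le
  -- Branch B : volume E = 0
  by_cases hE0 : volume E = 0
  · have hmax : ∀ x, maxInd E x = 0 := by
      intro x
      refine le_antisymm ?_ (zero_le)
      refine iSup_le fun c => iSup_le fun r => iSup_le fun _ => iSup_le fun _ => ?_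
      have h0 : volume (E ∩ closedBall c r) = 0 := measure_mono_null inter_subset_left hE0
      simp [h0]
    have hSe : {x | ENNReal.ofReal lam < maxInd E x} = ∅ := by
      refine eq_empty_iff_forall_notMem.2 fun x hx => ?_
      rw [mem_setOf_eq, hmax x] at hx
      exact ENNReal.not_lt_zero hx
    rw [hSe, Measure.restrict_empty, lintegral_zero_measure, ENNReal.zero_rpow_of_pos hip,
      mul_zero]
    exact zero_le

  -- Branch D (n = 0)
  -- Branch C : ∫ E w = ⊤
  by_cases hνEt : (∫⁻ x in E, ENNReal.ofReal (w x)) = ⊤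
  · rw [hνEt, ENNReal.top_rpow_of_pos hip, ENNReal.mul_top
      (mul_ne_zero (ne_of_gt (ENNReal.ofReal_pos.2 (by positivity))) hK0)]
    exact le_top
  -- Branch D : n = 0
  by_cases hn : n = 0
  · subst hn
    haveI : Subsingleton (Fin 0 → ℝ) := ⟨fun a b => funext fun i => i.elim0⟩
    set S := {x | ENNReal.ofReal lam < maxInd E x} with hSdef
    have hball_univ : ∀ (c : Fin 0 → ℝ) (r : ℝ), 0 ≤ r → closedBall c r = univ := by
      intro c r hr
      refine eq_univ_of_forall fun y => ?_
      rw [mem_closedBall, Subsingleton.elim y c, dist_self]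
      exact hr
    by_cases hS0 : (∫⁻ x in S, ENNReal.ofReal (w x)) = 0
    · rw [hS0, ENNReal.zero_rpow_of_pos hip, mul_zero]; exact zero_le
    have hEuniv : E = univ := by
      obtain ⟨y, hy⟩ := nonempty_of_measure_ne_zero hE0
      exact eq_univ_of_forall fun z => (Subsingleton.elim y z) ▸ hy
    have hνu0 : (∫⁻ x in (univ : Set (Fin 0 → ℝ)), ENNReal.ofReal (w x)) ≠ 0 := by
      intro h
      exact hS0 (le_antisymm (le_trans (lintegral_mono_set (subset_univ _)) h.le) (zero_le))
    have hνut : (∫⁻ x in (univ : Set (Fin 0 → ℝ)), ENNReal.ofReal (w x)) ≠ ⊤ := by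
      rw [← hEuniv]; exact hνEt
    have hvolu0 : volume (univ : Set (Fin 0 → ℝ)) ≠ 0 := by
      rw [← hball_univ 0 1 zero_le_one]
      exact (lt_of_lt_of_le (measure_ball_pos _ _ one_pos) (measure_mono ball_subset_closedBall)).ne'
    have hvolut : volume (univ : Set (Fin 0 → ℝ)) ≠ ⊤ := by
      rw [← hball_univ 0 1 zero_le_one]
      exact measure_closedBall_lt_top.ne
    have h1K : (1:ℝ≥0∞) ≤ K := by
      have hsub : (univ : Set (Fin 0 → ℝ)) ⊆ closedBall 0 1 := by
        rw [hball_univ 0 1 zero_le_one]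
      have := hAp 0 1 one_pos univ hsub MeasurableSet.univ
      rw [hball_univ 0 1 zero_le_one, ENNReal.div_self hvolu0 hvolut,
        ENNReal.div_self hνu0 hνut, one_mul, ENNReal.one_rpow] at this
      exact this
    have hSne : S.Nonempty := by
      rcases eq_empty_or_nonempty S with h | h
      · exfalso; apply hS0; rw [h]; simp
      · exact h
    obtain ⟨x₀, hx₀⟩ := hSne
    have hmax1 : maxInd E x₀ ≤ 1 :=
      iSup_le fun c => iSup_le fun r => iSup_le fun _ => iSup_le fun _ =>
        ENNReal.div_le_of_le_mul (by rw [one_mul]; exact measure_mono inter_subset_right)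
    have hlam1 : ENNReal.ofReal lam ≤ 1 := le_of_lt (lt_of_lt_of_le hx₀ hmax1)
    calc ENNReal.ofReal lam * (∫⁻ x in S, ENNReal.ofReal (w x)) ^ (1 / p)
        ≤ 1 * (∫⁻ x in E, ENNReal.ofReal (w x)) ^ (1 / p) := by
          refine mul_le_mul' hlam1 (ENNReal.rpow_le_rpow ?_ hip.le)
          rw [hEuniv]
          exact lintegral_mono_set (subset_univ _)
      _ ≤ ENNReal.ofReal ((8:ℝ)^(0:ℕ)) * K * (∫⁻ x in E, ENNReal.ofReal (w x)) ^ (1 / p) := by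
          refine mul_le_mul' ?_ le_rfl
          rw [pow_zero, ENNReal.ofReal_one, one_mul]
          exact h1K
  -- Main branch
  · set S := {x | ENNReal.ofReal lam < maxInd E x} with hSdef
    set cb : ℝ≥0∞ := volume (ball (0 : Fin n → ℝ) 1) with hcb
    have hcb0 : cb ≠ 0 := (measure_ball_pos _ _ one_pos).ne'
    have hcbt : cb ≠ ⊤ :=
      (lt_of_le_of_lt (measure_mono ball_subset_closedBall) measure_closedBall_lt_top).ne
    have h8pos : (0:ℝ) < 8^n := by positivity
    have hl0 : ENNReal.ofReal (lam / 8^n) ≠ 0 := (ENNReal.ofReal_pos.2 (by positivity)).ne'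
    have hlt : ENNReal.ofReal (lam / 8^n) ≠ ⊤ := ENNReal.ofReal_ne_top
    set R : ℝ := max 1 ((volume E).toReal * 8^n / (lam * cb.toReal)) with hR
    -- the key selection claim
    have hsel : ∀ x ∈ S, ∃ s : ℝ, 0 < s ∧ s ≤ R ∧
        ENNReal.ofReal (lam / 8^n) * volume (closedBall x (4*s)) < volume (E ∩ closedBall x s) := by
      intro x hx
      rw [hSdef, mem_setOf_eq, maxInd] at hx
      obtain ⟨c, hc⟩ := lt_iSup_iff.1 hx
      obtain ⟨r, hr'⟩ := lt_iSup_iff.1 hc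
      obtain ⟨hr, h⟩ := lt_iSup_iff.1 hr'
      obtain ⟨hxc, hlt'⟩ := lt_iSup_iff.1 h
      have hB0 : volume (closedBall c r) ≠ 0 :=
        (lt_of_lt_of_le (measure_ball_pos _ _ hr) (measure_mono ball_subset_closedBall)).ne'
      have hBt : volume (closedBall c r) ≠ ⊤ := measure_closedBall_lt_top.ne
      have h1 : ENNReal.ofReal lam * volume (closedBall c r) < volume (E ∩ closedBall c r) :=
        (ENNReal.lt_div_iff_mul_lt (Or.inl hB0) (Or.inl hBt)).1 hlt'
      refine ⟨2*r, by linarith, ?_, ?_⟩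
      · -- radius bound
        by_contra hcon
        push_neg at hcon
        have h2r1 : (1:ℝ) ≤ 2*r := le_trans (le_max_left _ _) hcon.le
        -- volume of closedBall x (2r) in terms of (2r)^n
        have hcbR : 0 < cb.toReal := ENNReal.toReal_pos hcb0 hcbt
        have hvolc : volume (closedBall c r) = ENNReal.ofReal (r^n) * cb := by
          rw [Measure.addHaar_closedBall _ _ hr.le]
          simp [hcb]
        have hle : ENNReal.ofReal (lam * (r^n * cb.toReal)) ≤ volume E := by
          have h2 := h1.le.trans (measure_mono inter_subset_left)
          rw [hvolc] at h2
          calc ENNReal.ofReal (lam * (r^n * cb.toReal))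
              = ENNReal.ofReal lam * (ENNReal.ofReal (r^n) * cb) := by
                rw [ENNReal.ofReal_mul hlam.le, ENNReal.ofReal_mul (by positivity),
                  ENNReal.ofReal_toReal hcbt]
            _ ≤ volume E := h2
        have hreal : lam * (r^n * cb.toReal) ≤ (volume E).toReal := by
          have h3 := ENNReal.toReal_mono hEvol.ne hle
          rwa [ENNReal.toReal_ofReal (by positivity)] at h3
        have hrn : r^n ≤ (volume E).toReal / (lam * cb.toReal) := by
          rw [le_div_iff₀ (by positivity)]
          nlinarith [hreal]
        have h2r : 2*r ≤ (volume E).toReal * 8^n / (lam * cb.toReal) := by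
          have hxx : 1 < 2*r := lt_of_le_of_lt (le_max_left _ _) hcon
          have h2rn : 2*r ≤ (2*r)^n := le_self_pow₀ (by linarith) hn
          have hmp : ((2:ℝ)*r)^n = 2^n * r^n := mul_pow 2 r n
          have h28 : (2:ℝ)^n ≤ 8^n := pow_le_pow_left₀ (by norm_num) (by norm_num) n
          have hrn0 : (0:ℝ) ≤ r^n := by positivity
          calc 2*r ≤ 2^n * r^n := by rw [← hmp]; exact h2rn
            _ ≤ 8^n * ((volume E).toReal / (lam * cb.toReal)) :=
                mul_le_mul h28 hrn hrn0 (by positivity)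
            _ = (volume E).toReal * 8^n / (lam * cb.toReal) := by ring
        exact absurd (le_trans h2r (le_max_right _ _)) (not_le.2 hcon)
      · -- density
        have hsub : closedBall c r ⊆ closedBall x (2*r) := by
          intro y hy
          rw [mem_closedBall] at hy hxc ⊢
          calc dist y x ≤ dist y c + dist c x := dist_triangle _ _ _
            _ ≤ r + r := add_le_add hy (by rwa [dist_comm] at hxc)
            _ = 2*r := by ring
        have hvol8 : volume (closedBall x (4*(2*r))) =
            ENNReal.ofReal ((8:ℝ)^n) * volume (closedBall c r) := by
          have h1' : (4:ℝ)*(2*r) = 8*r := by ring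
          rw [h1', Measure.addHaar_closedBall_mul_of_pos _ _ (by norm_num : (0:ℝ) < 8) r,
            Measure.addHaar_closedBall_center]
          simp only [Module.finrank_fin_fun]
          congr 1
          exact (Measure.addHaar_closedBall_center volume c r).symm
        calc ENNReal.ofReal (lam / 8^n) * volume (closedBall x (4*(2*r)))
            = ENNReal.ofReal lam / ENNReal.ofReal ((8:ℝ)^n) *
                (ENNReal.ofReal ((8:ℝ)^n) * volume (closedBall c r)) := by
              rw [hvol8, ENNReal.ofReal_div_of_pos h8pos]
          _ = ENNReal.ofReal lam * volume (closedBall c r) := by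
              rw [← mul_assoc, ENNReal.div_mul_cancel (ENNReal.ofReal_pos.2 h8pos).ne'
                ENNReal.ofReal_ne_top]
          _ < volume (E ∩ closedBall c r) := h1
          _ ≤ volume (E ∩ closedBall x (2*r)) :=
              measure_mono (inter_subset_inter_right _ hsub)
    choose! rad hrad0 hradR hraddens using hsel
    obtain ⟨u, huS, hdisj, hcov⟩ :=
      Vitali.exists_disjoint_subfamily_covering_enlargement_closedBall S id rad R
        (fun a ha => hradR a ha) 4 (by norm_num)
    simp only [id] at hdisj hcov
    -- countability
    have hucnt : u.Countable := by
      have hpw : Pairwise (Function.onFun Disjoint fun b : u => closedBall (b : Fin n → ℝ) (rad b)) :=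
        fun i j hij => hdisj i.2 j.2 (fun h => hij (Subtype.ext h))
      have hcnt := Measure.countable_meas_pos_of_disjoint_iUnion (μ := volume)
        (fun b : u => measurableSet_closedBall) hpw
      have huniv : (univ : Set u).Countable := by
        refine hcnt.mono (fun i _ => ?_)
        exact lt_of_lt_of_le (measure_ball_pos _ _ (hrad0 i (huS i.2)))
          (measure_mono ball_subset_closedBall)
      exact Set.countable_coe_iff.1 (Set.countable_univ_iff.1 huniv)
    -- covering
    have hcov' : S ⊆ ⋃ b ∈ u, closedBall b (4 * rad b) := by
      intro a ha
      obtain ⟨b, hb, hsub⟩ := hcov a ha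
      exact mem_iUnion₂.2 ⟨b, hb, hsub (mem_closedBall_self (hrad0 a ha).le)⟩
    set t : ℝ≥0∞ := (K / ENNReal.ofReal (lam / 8^n)) ^ p with ht
    have htne : t ≠ ⊤ :=
      (ENNReal.rpow_lt_top_of_nonneg hp0.le (ENNReal.div_lt_top hKtop hl0).ne).ne
    -- per-ball estimate
    have hball : ∀ b ∈ u, ν (closedBall b (4 * rad b)) ≤ t * ν (E ∩ closedBall b (rad b)) := by
      intro b hb
      have hbS := huS hb
      have h0 := hrad0 b hbS
      have hdens := hraddens b hbS
      set F := E ∩ closedBall b (rad b) with hF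
      have hFQ : F ⊆ closedBall b (4 * rad b) :=
        inter_subset_right.trans (closedBall_subset_closedBall (by linarith))
      have hFmeas : MeasurableSet F := hmE.inter measurableSet_closedBall
      have hQm : MeasurableSet (closedBall b (4 * rad b)) := measurableSet_closedBall
      have hQv0 : volume (closedBall b (4 * rad b)) ≠ 0 :=
        (lt_of_lt_of_le (measure_ball_pos _ _ (by linarith)) (measure_mono ball_subset_closedBall)).ne'
      have hQvt : volume (closedBall b (4 * rad b)) ≠ ⊤ := measure_closedBall_lt_top.ne
      have hap := hAp b (4 * rad b) (by linarith) F hFQ hFmeas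
      rw [hνap _ hQm, hνap _ hFmeas] at hap
      have hfrac : ENNReal.ofReal (lam / 8^n) ≤ volume F / volume (closedBall b (4 * rad b)) := by
        rw [ENNReal.le_div_iff_mul_le (Or.inl hQv0) (Or.inl hQvt)]
        exact hdens.le
      have h2 : ENNReal.ofReal (lam / 8^n) * (ν (closedBall b (4 * rad b)) / ν F) ^ (1/p) ≤ K :=
        le_trans (mul_le_mul_left hfrac _) hap
      have h3 : (ν (closedBall b (4 * rad b)) / ν F) ^ (1/p) ≤ K / ENNReal.ofReal (lam / 8^n) := by
        rw [ENNReal.le_div_iff_mul_le (Or.inl hl0) (Or.inl hlt)]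
        rwa [mul_comm]
      have h4 : ν (closedBall b (4 * rad b)) / ν F ≤ t := ennreal_rpow_inv_le hp h3
      have hFt : ν F ≠ ⊤ := by
        rw [← hνap _ hFmeas]
        exact fun h => hνEt (top_le_iff.1 (h ▸ lintegral_mono_set inter_subset_left))
      exact ennreal_div_le_helper h4 hFt htne
    -- summation
    have hUm : MeasurableSet (⋃ b ∈ u, closedBall b (4 * rad b)) :=
      MeasurableSet.biUnion hucnt (fun b _ => measurableSet_closedBall)
    have hmain : (∫⁻ x in S, ENNReal.ofReal (w x)) ≤ t * (∫⁻ x in E, ENNReal.ofReal (w x)) := by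
      calc (∫⁻ x in S, ENNReal.ofReal (w x))
          ≤ ∫⁻ x in ⋃ b ∈ u, closedBall b (4 * rad b), ENNReal.ofReal (w x) :=
            lintegral_mono_set hcov'
        _ = ν (⋃ b ∈ u, closedBall b (4 * rad b)) := hνap _ hUm
        _ ≤ ∑' b : u, ν (closedBall b (4 * rad b)) := measure_biUnion_le ν hucnt _
        _ ≤ ∑' b : u, t * ν (E ∩ closedBall (b : Fin n → ℝ) (rad b)) :=
            ENNReal.tsum_le_tsum (fun b => hball b b.2)
        _ = t * ∑' b : u, ν (E ∩ closedBall (b : Fin n → ℝ) (rad b)) := ENNReal.tsum_mul_left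
        _ = t * ν (⋃ b ∈ u, E ∩ closedBall b (rad b)) := by
            rw [measure_biUnion hucnt (hdisj.mono (fun b => inter_subset_right))
              (fun b _ => hmE.inter measurableSet_closedBall)]
        _ ≤ t * ν E := by
            refine mul_le_mul_right (measure_mono (iUnion₂_subset fun b _ => inter_subset_left)) _
        _ = t * (∫⁻ x in E, ENNReal.ofReal (w x)) := by rw [hνap _ hmE]
    -- conclusion
    calc ENNReal.ofReal lam * (∫⁻ x in S, ENNReal.ofReal (w x)) ^ (1/p)
        ≤ ENNReal.ofReal lam * (t * (∫⁻ x in E, ENNReal.ofReal (w x))) ^ (1/p) :=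
          mul_le_mul_right (ENNReal.rpow_le_rpow hmain hip.le) _
      _ = ENNReal.ofReal lam * ((K / ENNReal.ofReal (lam / 8^n)) *
            (∫⁻ x in E, ENNReal.ofReal (w x)) ^ (1/p)) := by
          rw [ENNReal.mul_rpow_of_nonneg _ _ hip.le, ht, ← ENNReal.rpow_mul,
            mul_one_div_cancel hp0.ne', ENNReal.rpow_one]
      _ = ENNReal.ofReal ((8:ℝ)^n) * K * (∫⁻ x in E, ENNReal.ofReal (w x)) ^ (1/p) := by
          rw [← mul_assoc]
          congr 1
          rw [ENNReal.ofReal_div_of_pos h8pos, div_eq_mul_inv K,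
            ENNReal.inv_div (Or.inr ENNReal.ofReal_ne_top) (Or.inr (ENNReal.ofReal_pos.2 hlam).ne'),
            ← mul_div_assoc,
            ENNReal.mul_div_cancel (ENNReal.ofReal_pos.2 hlam).ne' ENNReal.ofReal_ne_top,
            mul_comm]
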